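/- Each of the four K-Knuth generating relations preserves the length of the longest strictly decreasing subsequence: if w2 is obtained from w1 by one application of xzy → zxy (x<y<z), yxz → yzx (x<y<z), x → xx, or xyx → yxy (in arbitrary context), then lds(w1) = lds(w2). -/

import Mathlib

/-- One application, inside an arbitrary context, of a K-Knuth generating relation:
`xzy ≡ zxy` and `yxz ≡ yzx` for `x < y < z`, `x ≡ xx`, and `xyx ≡ yxy`. -/
inductive KKnuthRel : List ℕ+ → List ℕ+ → Prop
  | rel1 (u v : List ℕ+) (x y z : ℕ+) (h1 : x < y) (h2 : y < z) :
      KKnuthRel (u ++ [x, z, y] ++ v) (u ++ [z, x, y] ++ v)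
  | rel2 (u v : List ℕ+) (x y z : ℕ+) (h1 : x < y) (h2 : y < z) :
      KKnuthRel (u ++ [y, x, z] ++ v) (u ++ [y, z, x] ++ v)
  | rel3 (u v : List ℕ+) (x : ℕ+) :
      KKnuthRel (u ++ [x] ++ v) (u ++ [x, x] ++ v)
  | rel4 (u v : List ℕ+) (x y : ℕ+) :
      KKnuthRel (u ++ [x, y, x] ++ v) (u ++ [y, x, y] ++ v)

/-- K-Knuth equivalence of words: the equivalence closure of the generating moves. -/
def KKnuth : List ℕ+ → List ℕ+ → Prop := Relation.EqvGen KKnuthRel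

/-- Length of the longest strictly increasing subsequence of a word. -/
def lis (w : List ℕ+) : ℕ :=
  ((w.sublists.filter fun s => decide (List.IsChain (· < ·) s)).map List.length).foldr max 0

/-- Length of the longest strictly decreasing subsequence of a word. -/
def lds (w : List ℕ+) : ℕ :=
  ((w.sublists.filter fun s => decide (List.IsChain (· > ·) s)).map List.length).foldr max 0

open List

lemma le_foldr_max {l : List ℕ} {a : ℕ} (h : a ∈ l) : a ≤ l.foldr max 0 := by
  induction l with
  | nil => simp at h
  | cons x xs ih =>
    rcases List.mem_cons.mp h with rfl | h
    · exact le_max_left _ _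
    · exact le_trans (ih h) (le_max_right _ _)

lemma foldr_max_le {l : List ℕ} {b : ℕ} (h : ∀ a ∈ l, a ≤ b) : l.foldr max 0 ≤ b := by
  induction l with
  | nil => simp
  | cons x xs ih =>
    simp only [List.foldr_cons, max_le_iff]
    exact ⟨h x (by simp), ih fun a ha => h a (by simp [ha])⟩

lemma le_lds {w s : List ℕ+} (hs : s <+ w) (hc : Chain' (· > ·) s) : s.length ≤ lds w := by
  apply le_foldr_max
  simp only [List.mem_map]
  exact ⟨s, by simp [List.mem_filter, List.mem_sublists, hs]; exact hc, rfl⟩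

lemma lds_le {w : List ℕ+} {n : ℕ}
    (h : ∀ s, s <+ w → Chain' (· > ·) s → s.length ≤ n) : lds w ≤ n := by
  apply foldr_max_le
  intro a ha
  simp only [List.mem_map, List.mem_filter, List.mem_sublists, decide_eq_true_eq] at ha
  obtain ⟨s, ⟨hs, hcs⟩, rfl⟩ := ha
  exact h s hs hcs

lemma lds_mono {w1 w2 : List ℕ+} (h : w1 <+ w2) : lds w1 ≤ lds w2 :=
  lds_le fun s hs hc => le_lds (hs.trans h) hc

lemma lds_le_of_middle (u v m1 m2 : List ℕ+)
    (H : ∀ b : List ℕ+, b <+ m1 → Chain' (· > ·) b →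
      ∃ b', b' <+ m2 ∧ b'.length = b.length ∧
        ∀ a c : List ℕ+, Chain' (· > ·) (a++b++c) → Chain' (· > ·) (a++b'++c)) :
    lds (u ++ m1 ++ v) ≤ lds (u ++ m2 ++ v) := by
  apply lds_le
  intro s hs hc
  rw [List.sublist_append_iff] at hs
  obtain ⟨s1, c, rfl, hs1, hcv⟩ := hs
  rw [List.sublist_append_iff] at hs1
  obtain ⟨a, b, rfl, ha, hb⟩ := hs1
  have hbc : b <+ a ++ b ++ c := by
    rw [List.append_assoc]
    exact (List.sublist_append_left b c).trans (List.sublist_append_right a _)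
  obtain ⟨b', hb', hlen, hch⟩ := H b hb (hc.sublist hbc)
  have : (a ++ b ++ c).length = (a ++ b' ++ c).length := by simp [hlen]
  rw [this]
  exact le_lds ((ha.append hb').append hcv) (hch a c hc)

lemma sublist_pair {p q : ℕ+} {b : List ℕ+} (h : b <+ [p,q]) :
    b = [] ∨ b = [p] ∨ b = [q] ∨ b = [p,q] := by
  have := List.mem_sublists.2 h
  simp [List.sublists] at this
  tauto

lemma sublist_triple {p q r : ℕ+} {b : List ℕ+} (h : b <+ [p,q,r]) :
    b = [] ∨ b = [p] ∨ b = [q] ∨ b = [r] ∨ b = [p,q] ∨ b = [p,r] ∨ b = [q,r] ∨ b = [p,q,r] := by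
  have := List.mem_sublists.2 h
  simp [List.sublists] at this
  tauto

/-- keep the same middle subsequence -/
lemma keep {b m2 : List ℕ+} (hs : b <+ m2) :
    ∃ b', b' <+ m2 ∧ b'.length = b.length ∧
      ∀ a c : List ℕ+, Chain' (· > ·) (a++b++c) → Chain' (· > ·) (a++b'++c) :=
  ⟨b, hs, rfl, fun _ _ h => h⟩

lemma chain_mid {p q p' q' : ℕ+} (h1 : p' ≤ p) (h2 : q' < p') (h3 : q ≤ q') :
    ∀ a c : List ℕ+, Chain' (· > ·) (a++[p,q]++c) → Chain' (· > ·) (a++[p',q']++c) := by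
  intro a c hch
  rw [show a++[p,q]++c = a++(p::q::c) by simp] at hch
  rw [show a++[p',q']++c = a++(p'::q'::c) by simp]
  unfold Chain' at hch ⊢
  rw [List.isChain_append] at hch ⊢
  obtain ⟨ha, hm, hlast⟩ := hch
  rw [List.isChain_cons_cons] at hm
  obtain ⟨hpq, hqc⟩ := hm
  rw [List.isChain_cons] at hqc
  refine ⟨ha, ?_, ?_⟩
  · rw [List.isChain_cons_cons]
    refine ⟨h2, ?_⟩
    rw [List.isChain_cons]
    exact ⟨fun t ht => lt_of_lt_of_le (hqc.1 t ht) h3, hqc.2⟩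
  · intro pa hpa t ht
    simp only [List.head?_cons, Option.mem_def, Option.some.injEq] at ht
    subst ht
    exact lt_of_le_of_lt h1 (hlast pa hpa p (by simp))

/-- replace the middle pair, with length-2 packaging -/
lemma swap {p q p' q' : ℕ+} {m2 : List ℕ+} (hs : [p',q'] <+ m2)
    (h1 : p' ≤ p) (h2 : q' < p') (h3 : q ≤ q') :
    ∃ b', b' <+ m2 ∧ b'.length = ([p,q] : List ℕ+).length ∧
      ∀ a c : List ℕ+, Chain' (· > ·) (a++[p,q]++c) → Chain' (· > ·) (a++b'++c) :=
  ⟨[p',q'], hs, rfl, chain_mid h1 h2 h3⟩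

/-- Each K-Knuth generating move (applied in an arbitrary context) preserves the
length of the longest strictly decreasing subsequence. -/
theorem kKnuthRel_lds (w1 w2 : List ℕ+) (h : KKnuthRel w1 w2) :
    lds w1 = lds w2 := by
  cases h with
  | rel1 u v x y z h1 h2 =>
    refine le_antisymm (lds_le_of_middle u v _ _ ?_) (lds_le_of_middle u v _ _ ?_)
    · intro b hb hcb
      rcases sublist_triple hb with rfl|rfl|rfl|rfl|rfl|rfl|rfl|rfl
      · exact keep (List.nil_sublist _)
      · exact keep (((List.nil_sublist [y]).cons₂ x).cons z)
      · exact keep ((List.nil_sublist [x,y]).cons₂ z)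
      · exact keep (((Sublist.refl [y]).cons x).cons z)
      · exact absurd (List.isChain_cons_cons.mp hcb).1 (lt_asymm (h1.trans h2))
      · exact absurd (List.isChain_cons_cons.mp hcb).1 (lt_asymm h1)
      · exact keep (((Sublist.refl [y]).cons x).cons₂ z)
      · exact absurd (List.isChain_cons_cons.mp hcb).1 (lt_asymm (h1.trans h2))
    · intro b hb hcb
      rcases sublist_triple hb with rfl|rfl|rfl|rfl|rfl|rfl|rfl|rfl
      · exact keep (List.nil_sublist _)
      · exact keep (((List.nil_sublist [y]).cons₂ z).cons x)
      · exact keep ((List.nil_sublist [z,y]).cons₂ x)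
      · exact keep (((Sublist.refl [y]).cons z).cons x)
      · exact swap (((Sublist.refl [y]).cons₂ z).cons x) le_rfl h2 h1.le
      · exact keep (((Sublist.refl [y]).cons₂ z).cons x)
      · exact absurd (List.isChain_cons_cons.mp hcb).1 (lt_asymm h1)
      · exact absurd (List.isChain_cons_cons.mp (List.isChain_cons_cons.mp hcb).2).1 (lt_asymm h1)
  | rel2 u v x y z h1 h2 =>
    refine le_antisymm (lds_le_of_middle u v _ _ ?_) (lds_le_of_middle u v _ _ ?_)
    · intro b hb hcb
      rcases sublist_triple hb with rfl|rfl|rfl|rfl|rfl|rfl|rfl|rfl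
      · exact keep (List.nil_sublist _)
      · exact keep ((List.nil_sublist [z,x]).cons₂ y)
      · exact keep (((Sublist.refl [x]).cons z).cons y)
      · exact keep (((List.nil_sublist [x]).cons₂ z).cons y)
      · exact keep (((Sublist.refl [x]).cons z).cons₂ y)
      · exact absurd (List.isChain_cons_cons.mp hcb).1 (lt_asymm h2)
      · exact absurd (List.isChain_cons_cons.mp hcb).1 (lt_asymm (h1.trans h2))
      · exact absurd (List.isChain_cons_cons.mp (List.isChain_cons_cons.mp hcb).2).1 (lt_asymm (h1.trans h2))
    · intro b hb hcb
      rcases sublist_triple hb with rfl|rfl|rfl|rfl|rfl|rfl|rfl|rfl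
      · exact keep (List.nil_sublist _)
      · exact keep ((List.nil_sublist [x,z]).cons₂ y)
      · exact keep (((Sublist.refl [z]).cons x).cons y)
      · exact keep (((List.nil_sublist [z]).cons₂ x).cons y)
      · exact absurd (List.isChain_cons_cons.mp hcb).1 (lt_asymm h2)
      · exact keep (((List.nil_sublist [z]).cons₂ x).cons₂ y)
      · exact swap (((List.nil_sublist [z]).cons₂ x).cons₂ y) h2.le h1 le_rfl
      · exact absurd (List.isChain_cons_cons.mp hcb).1 (lt_asymm h2)
  | rel3 u v x =>
    refine le_antisymm (lds_mono ?_) (lds_le_of_middle u v _ _ ?_)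
    · exact ((Sublist.refl u).append ((List.nil_sublist [x]).cons₂ x)).append
        (Sublist.refl v)
    · intro b hb hcb
      rcases sublist_pair hb with rfl|rfl|rfl|rfl
      · exact keep (List.nil_sublist _)
      · exact keep (Sublist.refl [x])
      · exact keep (Sublist.refl [x])
      · exact absurd (List.isChain_cons_cons.mp hcb).1 (lt_irrefl x)
  | rel4 u v x y =>
    refine le_antisymm (lds_le_of_middle u v _ _ ?_) (lds_le_of_middle u v _ _ ?_)
    · intro b hb hcb
      rcases sublist_triple hb with rfl|rfl|rfl|rfl|rfl|rfl|rfl|rfl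
      · exact keep (List.nil_sublist _)
      · exact keep (((List.nil_sublist [y]).cons₂ x).cons y)
      · exact keep ((List.nil_sublist [x,y]).cons₂ y)
      · exact keep (((List.nil_sublist [y]).cons₂ x).cons y)
      · exact keep (((Sublist.refl [y]).cons₂ x).cons y)
      · exact absurd (List.isChain_cons_cons.mp hcb).1 (lt_irrefl x)
      · exact keep (((List.nil_sublist [y]).cons₂ x).cons₂ y)
      · exact absurd (List.isChain_cons_cons.mp hcb).1
          (lt_asymm (List.isChain_cons_cons.mp (List.isChain_cons_cons.mp hcb).2).1)
    · intro b hb hcb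
      rcases sublist_triple hb with rfl|rfl|rfl|rfl|rfl|rfl|rfl|rfl
      · exact keep (List.nil_sublist _)
      · exact keep (((List.nil_sublist [x]).cons₂ y).cons x)
      · exact keep ((List.nil_sublist [y,x]).cons₂ x)
      · exact keep (((List.nil_sublist [x]).cons₂ y).cons x)
      · exact keep (((Sublist.refl [x]).cons₂ y).cons x)
      · exact absurd (List.isChain_cons_cons.mp hcb).1 (lt_irrefl y)
      · exact keep (((List.nil_sublist [x]).cons₂ y).cons₂ x)
      · exact absurd (List.isChain_cons_cons.mp hcb).1
          (lt_asymm (List.isChain_cons_cons.mp (List.isChain_cons_cons.mp hcb).2).1)
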